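/- For every p ∈ [0,1) there is exactly one ξ ∈ ℝ with 0 < ξ, p·e^ξ < 1, and Q̃₂(ξ,p) = 0. -/

import Mathlib

open Finset

/-- `Q̃₂(ξ,p) = 1 − e^ξ + (1−p)·e^ξ·∑_{j=0}^b q(j)·p^j·e^{jξ}`, the numerator of the
critical-exponent equation for the algorithm class `𝒜₂`. -/
noncomputable def Qt2 (b : ℕ) (q : ℕ → ℝ) (ξ p : ℝ) : ℝ :=
  1 - Real.exp ξ + (1 - p) * Real.exp ξ *
    ∑ j ∈ Finset.range (b + 1), q j * p ^ j * Real.exp (j * ξ)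

/-- The polynomial counterpart of `Qt2` in the variable `x = e^ξ`. -/
noncomputable def Pf (b : ℕ) (q : ℕ → ℝ) (p x : ℝ) : ℝ :=
  1 - x + (1 - p) * ∑ j ∈ Finset.range (b + 1), q j * p ^ j * x ^ (j + 1)

lemma Qt2_eq_Pf (b : ℕ) (q : ℕ → ℝ) (ξ p : ℝ) :
    Qt2 b q ξ p = Pf b q p (Real.exp ξ) := by
  unfold Qt2 Pf
  have h : Real.exp ξ * ∑ j ∈ Finset.range (b + 1), q j * p ^ j * Real.exp (j * ξ)
      = ∑ j ∈ Finset.range (b + 1), q j * p ^ j * Real.exp ξ ^ (j + 1) := by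
    rw [Finset.mul_sum]
    refine Finset.sum_congr rfl fun j _ => ?_
    rw [Real.exp_nat_mul, pow_succ]
    ring
  rw [mul_assoc, h]

lemma convexOn_sum_aux {ι : Type*} (t : Finset ι) (f : ι → ℝ → ℝ)
    (h : ∀ i ∈ t, ConvexOn ℝ (Set.Ici 0) (f i)) :
    ConvexOn ℝ (Set.Ici 0) (fun x => ∑ i ∈ t, f i x) := by
  classical
  induction t using Finset.cons_induction with
  | empty => simpa using convexOn_const (0 : ℝ) (convex_Ici 0)
  | cons i t hi ih =>
    simp only [Finset.sum_cons]
    exact (h i (Finset.mem_cons_self _ _)).add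
      (ih fun j hj => h j (Finset.mem_cons_of_mem hj))

lemma convexOn_Pf (b : ℕ) (q : ℕ → ℝ) (p : ℝ)
    (hq : ∀ j, 0 ≤ q j) (hp0 : 0 ≤ p) (hp1 : p ≤ 1) :
    ConvexOn ℝ (Set.Ici 0) (Pf b q p) := by
  have h1 : ConvexOn ℝ (Set.Ici 0) (fun x : ℝ => 1 - x) :=
    ⟨convex_Ici 0, fun x _ y _ a bb ha hb hab => by
      simp only [smul_eq_mul]; linarith⟩
  have h2 : ConvexOn ℝ (Set.Ici 0)
      (fun x : ℝ => (1 - p) * ∑ j ∈ Finset.range (b + 1), q j * p ^ j * x ^ (j + 1)) := by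
    have hs : ConvexOn ℝ (Set.Ici 0)
        (fun x : ℝ => ∑ j ∈ Finset.range (b + 1), q j * p ^ j * x ^ (j + 1)) := by
      apply convexOn_sum_aux
      intro j _
      have hc : (0:ℝ) ≤ q j * p ^ j := mul_nonneg (hq j) (pow_nonneg hp0 j)
      have : ConvexOn ℝ (Set.Ici 0) (fun x : ℝ => (q j * p ^ j) • x ^ (j + 1)) :=
        ConvexOn.smul hc (convexOn_pow (j + 1))
      simpa [smul_eq_mul, mul_assoc] using this
    have := hs.smul (by linarith : (0:ℝ) ≤ 1 - p)
    simpa [smul_eq_mul] using this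
  unfold Pf
  exact h1.add h2

lemma continuous_Pf (b : ℕ) (q : ℕ → ℝ) (p : ℝ) : Continuous (Pf b q p) := by
  unfold Pf
  fun_prop

/-- For every `p ∈ [0,1)` there is exactly one `ξ` with `0 < ξ`, `p·e^ξ < 1`
and `Q̃₂(ξ,p) = 0`. -/
theorem stmt_5 (b : ℕ) (q : ℕ → ℝ)
    (hq : ∀ j, 0 ≤ q j) (hqb : ∀ j, b < j → q j = 0) (hq0 : 0 < q 0)
    (hqsum : ∑ j ∈ Finset.range (b + 1), q j < 1) :
    ∀ p ∈ Set.Ico (0 : ℝ) 1,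
      ∃! ξ : ℝ, 0 < ξ ∧ p * Real.exp ξ < 1 ∧ Qt2 b q ξ p = 0 := by
  intro p hp
  obtain ⟨hp0, hp1⟩ := hp
  have hq0le : q 0 ≤ ∑ j ∈ Finset.range (b + 1), q j :=
    Finset.single_le_sum (fun j _ => hq j) (Finset.mem_range.mpr (Nat.succ_pos b))
  have hq01 : q 0 < 1 := lt_of_le_of_lt hq0le hqsum
  rcases eq_or_lt_of_le hp0 with hp0' | hppos
  · -- case p = 0
    subst hp0'
    have hsum0 : ∀ ξ : ℝ, (∑ j ∈ Finset.range (b + 1),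
        q j * (0:ℝ) ^ j * Real.exp (j * ξ)) = q 0 := by
      intro ξ
      rw [Finset.sum_eq_single_of_mem 0 (Finset.mem_range.mpr (Nat.succ_pos b))]
      · simp
      · intro j _ hj
        simp [zero_pow hj]
    have hQ : ∀ ξ : ℝ, Qt2 b q ξ 0 = 1 - (1 - q 0) * Real.exp ξ := by
      intro ξ; unfold Qt2; rw [hsum0]; ring
    have h1q0 : 0 < 1 - q 0 := by linarith
    refine ⟨Real.log (1 - q 0)⁻¹, ⟨?_, ?_, ?_⟩, ?_⟩
    · exact Real.log_pos ((one_lt_inv_iff₀).mpr ⟨h1q0, by linarith⟩)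
    · simp
    · rw [hQ, Real.exp_log (by positivity)]
      field_simp
      ring
    · rintro ξ ⟨-, -, hξ0⟩
      rw [hQ] at hξ0
      have : Real.exp ξ = (1 - q 0)⁻¹ := by
        field_simp at hξ0 ⊢
        linarith
      rw [← Real.exp_log (show (0:ℝ) < (1 - q 0)⁻¹ by positivity)] at this
      exact Real.exp_injective this
  · -- case 0 < p
    set S := ∑ j ∈ Finset.range (b + 1), q j with hS
    have hSpos : 0 ≤ S := Finset.sum_nonneg fun j _ => hq j
    set c : ℝ := 1 / p with hc
    have hcpos : 0 < c := by positivity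
    have hpc : p * c = 1 := by rw [hc, mul_one_div, div_self hppos.ne']
    have hc1 : 1 < c := by
      rw [hc, lt_div_iff₀ hppos]; linarith
    -- value at 1
    have hPf1 : 0 < Pf b q p 1 := by
      have h1 : Pf b q p 1 = (1 - p) * ∑ j ∈ Finset.range (b + 1), q j * p ^ j := by
        unfold Pf
        simp only [one_pow, mul_one, sub_self, zero_add]
      rw [h1]
      apply mul_pos (by linarith)
      apply Finset.sum_pos' (fun j _ => mul_nonneg (hq j) (pow_nonneg hp0 j))
      exact ⟨0, Finset.mem_range.mpr (Nat.succ_pos b), by simpa using hq0⟩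
    -- value at c
    have hPfc : Pf b q p c < 0 := by
      have hsum : ∑ j ∈ Finset.range (b + 1), q j * p ^ j * c ^ (j + 1) = S * c := by
        rw [hS, Finset.sum_mul]
        refine Finset.sum_congr rfl fun j _ => ?_
        have hterm : p ^ j * c ^ (j + 1) = c := by
          rw [hc, div_pow, one_pow, pow_succ]
          field_simp
        calc q j * p ^ j * c ^ (j + 1) = q j * (p ^ j * c ^ (j + 1)) := by ring
          _ = q j * c := by rw [hterm]
      have hval : Pf b q p c = 1 - c + (1 - p) * (S * c) := by
        unfold Pf; rw [hsum]
      rw [hval]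
      have hsc : (1 - p) * S < 1 - p := by nlinarith
      have h2 : (1 - p) * S * c < (1 - p) * c := mul_lt_mul_of_pos_right hsc hcpos
      have hpc' : (1 - p) * c = c - 1 := by linear_combination -hpc
      nlinarith
    -- existence via IVT
    have hcont : ContinuousOn (Pf b q p) (Set.Icc 1 c) :=
      (continuous_Pf b q p).continuousOn
    have hIVT := intermediate_value_Ioo' (le_of_lt hc1) hcont
    have h0mem : (0:ℝ) ∈ Set.Ioo (Pf b q p c) (Pf b q p 1) := ⟨hPfc, hPf1⟩
    obtain ⟨x, hxmem, hxval⟩ := hIVT h0mem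
    obtain ⟨hx1, hxc⟩ := hxmem
    have hxpos : 0 < x := lt_trans one_pos hx1
    refine ⟨Real.log x, ⟨?_, ?_, ?_⟩, ?_⟩
    · exact Real.log_pos hx1
    · rw [Real.exp_log hxpos]
      calc p * x < p * c := mul_lt_mul_of_pos_left hxc hppos
        _ = 1 := hpc
    · rw [Qt2_eq_Pf, Real.exp_log hxpos, hxval]
    · -- uniqueness
      rintro ξ ⟨hξpos, hξlt, hξ0⟩
      -- both exp ξ and x are roots of Pf in (1, c); convexity forces equality
      have key : ∀ y z : ℝ, 1 < y → y < z → z < c →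
          Pf b q p y = 0 → Pf b q p z = 0 → False := by
        intro y z hy hyz hzc hPy hPz
        have hconv := convexOn_Pf b q p hq hp0 (le_of_lt hp1)
        have hden : 0 < c - y := by linarith
        set a : ℝ := (c - z) / (c - y) with ha
        set bb : ℝ := (z - y) / (c - y) with hbb
        have ha0 : 0 ≤ a := div_nonneg (by linarith) (by linarith)
        have hbbpos : 0 < bb := by
          apply div_pos <;> linarith
        have hab : a + bb = 1 := by
          rw [ha, hbb]; field_simp; ring
        have hcomb : a • y + bb • c = z := by
          rw [ha, hbb, smul_eq_mul, smul_eq_mul]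
          field_simp
          ring
        have := hconv.2 (Set.mem_Ici.mpr (by linarith : (0:ℝ) ≤ y))
          (Set.mem_Ici.mpr (le_of_lt hcpos)) ha0 (le_of_lt hbbpos) hab
        rw [hcomb] at this
        rw [hPz, hPy] at this
        simp only [smul_eq_mul, mul_zero, zero_add] at this
        nlinarith
      have hexp : Pf b q p (Real.exp ξ) = 0 := by rw [← Qt2_eq_Pf]; exact hξ0
      have h1e : 1 < Real.exp ξ := Real.one_lt_exp_iff.mpr hξpos
      have hec : Real.exp ξ < c := by
        rw [hc, lt_div_iff₀ hppos]
        linarith [hξlt]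
      rcases lt_trichotomy (Real.exp ξ) x with h | h | h
      · exact absurd (key _ _ h1e h hxc hexp hxval) (fun h => h)
      · rw [← Real.exp_log hxpos] at h
        exact Real.exp_injective h
      · exact absurd (key _ _ hx1 h hec hxval hexp) (fun h => h)
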